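/- arXiv:1811.02461 — 4 statements merged into one kernel-verified Lean document; each statement's English description precedes it below -/
import Mathlib

section
/- Let n ≥ m ≥ 1 and let S ⊂ Λ(m,n)^♯ be a slice. If σ ∈ S is a minimal element of S, then the set μ_σ^R(S) = (S \ {σ}) ∪ {Φ^{-1}(σ)} is again a slice, and Φ^{-1}(σ) is a maximal element of μ_σ^R(S). -/
/-- The set `Λ(m,n)` of paracyclic `m`-simplices: monotone maps `f : ℤ → ℤ`
satisfying `f(i+m+1) = f(i)+n+1`, partially ordered pointwise. -/
def Para (m n : ℕ) : Type :=
  {f : ℤ → ℤ // Monotone f ∧ ∀ i : ℤ, f (i + (m + 1)) = f i + (n + 1)}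

noncomputable instance (m n : ℕ) : PartialOrder (Para m n) :=
  Subtype.partialOrder _

/-- The Heller automorphism `Σ(σ)(i) = σ(i+1)`. -/
def heller (m n : ℕ) (σ : Para m n) : Para m n :=
  ⟨fun i => σ.1 (i + 1),
    fun _ _ h => σ.2.1 (by omega),
    fun i => by
      have h := σ.2.2 (i + 1)
      calc σ.1 (i + (m + 1) + 1) = σ.1 (i + 1 + (m + 1)) := by ring_nf
        _ = σ.1 (i + 1) + (n + 1) := h⟩

/-- The Coxeter automorphism `Φ(σ)(i) = σ(i) - 1`. -/
def coxeter (m n : ℕ) (σ : Para m n) : Para m n :=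
  ⟨fun i => σ.1 i - 1,
    fun a b h => by show σ.1 a - 1 ≤ σ.1 b - 1; have := σ.2.1 h; omega,
    fun i => by show σ.1 (i + (m + 1)) - 1 = σ.1 i - 1 + (n + 1); have := σ.2.2 i; omega⟩
/-- The inverse Coxeter automorphism `Φ⁻¹(σ)(i) = σ(i) + 1`. -/
def coxeterInv (m n : ℕ) (σ : Para m n) : Para m n :=
  ⟨fun i => σ.1 i + 1,
    fun a b h => by show σ.1 a + 1 ≤ σ.1 b + 1; have := σ.2.1 h; omega,
    fun i => by show σ.1 (i + (m + 1)) + 1 = σ.1 i + 1 + (n + 1); have := σ.2.2 i; omega⟩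

/-- `σ` and `τ` lie in the same `Φ`-orbit. -/
def sameOrbit (m n : ℕ) (σ τ : Para m n) : Prop :=
  ∃ k : ℤ, ∀ i : ℤ, τ.1 i = σ.1 i - k

/-- A slice in `Λ(m,n)^♯`: a finite set of strictly monotone (non-degenerate)
paracyclic simplices containing exactly one representative of each `Φ`-orbit and
convex in `Λ(m,n)^♯`. -/
def IsSlice (m n : ℕ) (S : Set (Para m n)) : Prop :=
  S.Finite ∧
  (∀ σ ∈ S, StrictMono σ.1) ∧
  (∀ τ : Para m n, StrictMono τ.1 → ∃! ρ : Para m n, ρ ∈ S ∧ sameOrbit m n τ ρ) ∧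
  (∀ σ ∈ S, ∀ τ ∈ S, ∀ ρ : Para m n, StrictMono ρ.1 → σ ≤ ρ → ρ ≤ τ → ρ ∈ S)

section aux

variable {m n : ℕ}

lemma para_le_iff {a b : Para m n} : a ≤ b ↔ ∀ i, a.1 i ≤ b.1 i := Iff.rfl

lemma para_ext {a b : Para m n} (h : ∀ i, a.1 i = b.1 i) : a = b :=
  Subtype.ext (funext h)

end aux

/-- Right mutation of a slice at a minimal element: if `σ ∈ S` is minimal, then
`(S \\ {σ}) ∪ {Φ⁻¹(σ)}` is again a slice, and `Φ⁻¹(σ)` is maximal in it. -/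

theorem stmt_8 (m n : ℕ) (hm : 1 ≤ m) (hmn : m ≤ n) (S : Set (Para m n))
    (hS : IsSlice m n S) (σ : Para m n) (hσ : σ ∈ S)
    (hmin : ∀ τ ∈ S, τ ≤ σ → τ = σ) :
    IsSlice m n ((S \ {σ}) ∪ {coxeterInv m n σ}) ∧
    (∀ τ ∈ (S \ {σ}) ∪ {coxeterInv m n σ}, coxeterInv m n σ ≤ τ → τ = coxeterInv m n σ) := by
  obtain ⟨hfin, hstrict, horb, hconv⟩ := hS
  set σ' := coxeterInv m n σ with hσ'def
  have hσ'val : ∀ i, σ'.1 i = σ.1 i + 1 := fun i => rfl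
  have hσs : StrictMono σ.1 := hstrict σ hσ
  have hσ's : StrictMono σ'.1 := by
    intro a b h
    have := hσs h
    simp only [hσ'val]
    omega
  -- uniqueness of orbit representatives in S
  have huniq : ∀ τ : Para m n, StrictMono τ.1 → ∀ ρ₁ ∈ S, ∀ ρ₂ ∈ S,
      sameOrbit m n τ ρ₁ → sameOrbit m n τ ρ₂ → ρ₁ = ρ₂ := by
    intro τ hτ ρ₁ h1 ρ₂ h2 o1 o2
    obtain ⟨ρ, -, hu⟩ := horb τ hτ
    rw [hu ρ₁ ⟨h1, o1⟩, hu ρ₂ ⟨h2, o2⟩]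
  have hmemS' : ∀ x : Para m n, x ∈ (S \ {σ}) ∪ {σ'} ↔ (x ∈ S ∧ x ≠ σ) ∨ x = σ' := by
    intro x
    simp only [Set.mem_union, Set.mem_diff, Set.mem_singleton_iff]
  -- membership characterization used everywhere
  constructor
  · refine ⟨hfin.diff.union (Set.finite_singleton _), ?_, ?_, ?_⟩
    · -- strict monotone
      intro x hx
      rcases (hmemS' x).1 hx with ⟨hxS, -⟩ | rfl
      · exact hstrict x hxS
      · exact hσ's
    · -- unique orbit representatives
      intro τ hτ
      obtain ⟨ρ, ⟨hρS, hρo⟩, hu⟩ := horb τ hτ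
      by_cases hρσ : ρ = σ
      · subst hρσ
        refine ⟨σ', ⟨(hmemS' σ').2 (Or.inr rfl), ?_⟩, ?_⟩
        · obtain ⟨k, hk⟩ := hρo
          exact ⟨k - 1, fun i => by have := hk i; simp only [hσ'val]; omega⟩
        · intro y ⟨hy, hyo⟩
          rcases (hmemS' y).1 hy with ⟨hyS, hyne⟩ | rfl
          · exact absurd (huniq τ hτ y hyS ρ hρS hyo hρo) hyne
          · rfl
      · refine ⟨ρ, ⟨(hmemS' ρ).2 (Or.inl ⟨hρS, hρσ⟩), hρo⟩, ?_⟩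
        intro y ⟨hy, hyo⟩
        rcases (hmemS' y).1 hy with ⟨hyS, -⟩ | rfl
        · exact huniq τ hτ y hyS ρ hρS hyo hρo
        · exfalso
          obtain ⟨k, hk⟩ := hyo
          have hσo : sameOrbit m n τ σ :=
            ⟨k + 1, fun i => by have := hk i; have := hσ'val i; omega⟩
          exact hρσ (huniq τ hτ ρ hρS σ hσ hρo hσo)
    · -- convexity
      intro a ha b hb ρ hρs hle1 hle2
      rcases (hmemS' a).1 ha with ⟨haS, hane⟩ | rfl
      · rcases (hmemS' b).1 hb with ⟨hbS, -⟩ | rfl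
        · -- both in S \ {σ}
          have hρS : ρ ∈ S := hconv a haS b hbS ρ hρs hle1 hle2
          refine (hmemS' ρ).2 (Or.inl ⟨hρS, ?_⟩)
          rintro rfl
          exact hane (hmin a haS hle1)
        · -- a ∈ S \ {σ}, b = σ'
          obtain ⟨τ, ⟨hτS, k, hk⟩, -⟩ := horb ρ hρs
          rcases le_or_gt k 0 with hk0 | hk0
          · have hρτ : ρ ≤ τ := para_le_iff.2 fun i => by have := hk i; omega
            have hρS : ρ ∈ S := hconv a haS τ hτS ρ hρs hle1 hρτ
            refine (hmemS' ρ).2 (Or.inl ⟨hρS, ?_⟩)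
            rintro rfl
            exact hane (hmin a haS hle1)
          · have hτσ : τ ≤ σ := para_le_iff.2 fun i => by
              have := hk i
              have h2 := para_le_iff.1 hle2 i
              have := hσ'val i
              omega
            have hτeq : τ = σ := hmin τ hτS hτσ
            subst hτeq
            have hk1 : k = 1 := by
              have h2 := para_le_iff.1 hle2 0
              have := hk 0
              have := hσ'val 0
              omega
            refine (hmemS' ρ).2 (Or.inr (para_ext fun i => ?_))
            have := hk i
            have := hσ'val i
            omega
      · rcases (hmemS' b).1 hb with ⟨hbS, -⟩ | rfl
        · -- a = σ', b ∈ S \ {σ}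
          have hσρ : σ ≤ ρ := para_le_iff.2 fun i => by
            have := para_le_iff.1 hle1 i
            have := hσ'val i
            omega
          have hρS : ρ ∈ S := hconv σ hσ b hbS ρ hρs hσρ hle2
          refine (hmemS' ρ).2 (Or.inl ⟨hρS, ?_⟩)
          rintro rfl
          have := para_le_iff.1 hle1 0
          have := hσ'val 0
          omega
        · exact (hmemS' ρ).2 (Or.inr (le_antisymm hle2 hle1))
  · -- maximality of σ'
    intro τ hτ hle
    rcases (hmemS' τ).1 hτ with ⟨hτS, -⟩ | rfl
    · exfalso
      have hτs : StrictMono τ.1 := hstrict τ hτS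
      set τ' := coxeter m n τ with hτ'def
      have hτ'val : ∀ i, τ'.1 i = τ.1 i - 1 := fun i => rfl
      have hτ's : StrictMono τ'.1 := by
        intro a b h
        have := hτs h
        simp only [hτ'val]
        omega
      have h1 : σ ≤ τ' := para_le_iff.2 fun i => by
        have := para_le_iff.1 hle i
        have := hσ'val i
        have := hτ'val i
        omega
      have h2 : τ' ≤ τ := para_le_iff.2 fun i => by have := hτ'val i; omega
      have hτ'S : τ' ∈ S := hconv σ hσ τ hτS τ' hτ's h1 h2
      have : τ' = τ := huniq τ hτs τ' hτ'S τ hτS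
        ⟨1, fun i => by have := hτ'val i; omega⟩ ⟨0, fun i => by omega⟩
      have := congrArg (fun f : Para m n => f.1 0) this
      simp only [hτ'val] at this
      omega
    · rfl
end

section
/- Let n ≥ m ≥ 1, let S ⊂ Λ(m,n)^♯ be a slice, and let σ ∈ S be a minimal element. Then for every v ∈ {0,1}^{m+1} such that the map σ + v (defined by (σ+v)(i) = σ(i) + v_{i mod (m+1)} for i ∈ [m], extended equivariantly) is strictly monotone, one has σ + v ∈ S ∪ {Φ^{-1}(σ)}. In other words, all non-degenerate paracyclic simplices of the rectilinear cube σ + I^{m+1} are contained in S ∪ {Φ^{-1}(σ)}. -/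

lemma para_shift (m n : ℕ) (g : Para m n) : ∀ q : ℤ, ∀ i : ℤ,
    g.1 (i + q * (m + 1)) = g.1 i + q * (n + 1) := by
  intro q
  induction q using Int.induction_on with
  | zero => simp
  | succ q ih =>
    intro i
    have h := g.2.2 (i + (q : ℤ) * (m + 1))
    have e : i + ((q : ℤ) + 1) * (m + 1) = i + (q : ℤ) * (m + 1) + (m + 1) := by ring
    rw [e, h, ih]; ring
  | pred q ih =>
    intro i
    have h := g.2.2 (i + (-(q : ℤ) - 1) * (m + 1))
    have e : i + (-(q : ℤ) - 1) * (m + 1) + (m + 1) = i + (-(q : ℤ)) * (m + 1) := by ring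
    rw [e, ih] at h
    linear_combination -h

lemma para_between (m n : ℕ) (σ τ : Para m n)
    (h : ∀ i : Fin (m + 1), σ.1 (i : ℕ) ≤ τ.1 (i : ℕ) ∧ τ.1 (i : ℕ) ≤ σ.1 (i : ℕ) + 1) :
    ∀ i : ℤ, σ.1 i ≤ τ.1 i ∧ τ.1 i ≤ σ.1 i + 1 := by
  intro i
  have hm1 : (0 : ℤ) < (m : ℤ) + 1 := by positivity
  set q := i / ((m : ℤ) + 1) with hq
  set j := i % ((m : ℤ) + 1) with hjdef
  have hj0 : 0 ≤ j := Int.emod_nonneg _ (by omega)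
  have hjm : j < (m : ℤ) + 1 := Int.emod_lt_of_pos _ hm1
  have hi : i = j + q * ((m : ℤ) + 1) := by
    rw [hq, hjdef]
    linarith [Int.mul_ediv_add_emod i ((m : ℤ) + 1)]
  have hσ := para_shift m n σ q j
  have hτ := para_shift m n τ q j
  have hjn : (j.toNat : ℤ) = j := Int.toNat_of_nonneg hj0
  have hfin : j.toNat < m + 1 := by omega
  have hh := h ⟨j.toNat, hfin⟩
  simp only [Fin.val_mk] at hh
  rw [hjn] at hh
  rw [hi, hσ, hτ]
  omega

/-- If `σ` is a minimal element of a slice `S`, then every non-degenerate (strictly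
monotone) paracyclic simplex of the rectilinear cube `σ + I^{m+1}`, i.e. every
strictly monotone `τ ∈ Λ(m,n)` with `τ(i) = σ(i) + v(i)` on `[m]` for some
`v ∈ {0,1}^{m+1}`, lies in `S ∪ {Φ⁻¹(σ)}`. -/
theorem stmt_10 (m n : ℕ) (hm : 1 ≤ m) (hmn : m ≤ n) (S : Set (Para m n))
    (hS : IsSlice m n S) (σ : Para m n) (hσ : σ ∈ S)
    (hmin : ∀ τ ∈ S, τ ≤ σ → τ = σ) :
    ∀ (v : Fin (m + 1) → Fin 2) (τ : Para m n), StrictMono τ.1 →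
      (∀ i : Fin (m + 1), τ.1 (i : ℕ) = σ.1 (i : ℕ) + ((v i : ℕ) : ℤ)) →
      τ ∈ S ∪ {coxeterInv m n σ} := by
  intro v τ hτmono hτv
  obtain ⟨hfin, hsm, huniq, hconv⟩ := hS
  have hbet : ∀ i : ℤ, σ.1 i ≤ τ.1 i ∧ τ.1 i ≤ σ.1 i + 1 := by
    apply para_between
    intro i
    have h1 := hτv i
    have h2 : (v i : ℕ) < 2 := (v i).isLt
    omega
  obtain ⟨ρ, ⟨hρS, k, hk⟩, -⟩ := huniq τ hτmono
  rcases le_or_gt 1 k with hk1 | hk0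
  · -- ρ ≤ σ, so ρ = σ and τ = Φ⁻¹ σ
    have hρσ : ρ ≤ σ := by
      show ρ.1 ≤ σ.1
      intro i
      have h1 := hbet i
      have h2 := hk i
      have : ρ.1 i ≤ σ.1 i := by omega
      exact this
    have heq : ρ = σ := hmin ρ hρS hρσ
    have hτσ : ∀ i : ℤ, τ.1 i = σ.1 i + k := by
      intro i
      have := hk i
      rw [heq] at this
      omega
    have hk1' : k = 1 := by
      have h0 := hbet 0
      have h1 := hτσ 0
      omega
    right
    show τ ∈ ({coxeterInv m n σ} : Set (Para m n))
    rw [Set.mem_singleton_iff]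
    apply Subtype.ext
    funext i
    show τ.1 i = σ.1 i + 1
    rw [hτσ i, hk1']
  · -- σ ≤ τ ≤ ρ, convexity
    left
    refine hconv σ hσ ρ hρS τ hτmono ?_ ?_
    · show σ.1 ≤ τ.1
      intro i
      have : σ.1 i ≤ τ.1 i := (hbet i).1
      exact this
    · show τ.1 ≤ ρ.1
      intro i
      have h1 := hk i
      have : τ.1 i ≤ ρ.1 i := by omega
      exact this
end

section
/- A subset S ⊂ Λ(1,n)^♯ (with n ≥ 1), identified with a collection of two-element subsets {σ(0) mod shifting} that happen to lie in {0,...,n}, is a slice if and only if either n = 1 and S = {(0,1)}, or n ≥ 2 and S = S' ∪ {(0,n)} where S' is (the image under the evident inclusion of) a slice in Λ(1,n-1)^♯ supported either on {0,...,n-1} or on {1,...,n}. -/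
/-- A (normalized) slice on the vertex window `{lo, …, hi}`: a set of edges `(a,b)`
with `lo ≤ a < b ≤ hi` containing exactly one edge of each length `d ∈ {1, …, hi-lo}`
and convex for the componentwise order. -/
def IsEdgeSlice (lo hi : ℤ) (S : Set (ℤ × ℤ)) : Prop :=
  (∀ p ∈ S, lo ≤ p.1 ∧ p.1 < p.2 ∧ p.2 ≤ hi) ∧
  (∀ d : ℤ, 1 ≤ d → d ≤ hi - lo → ∃! p : ℤ × ℤ, p ∈ S ∧ p.2 - p.1 = d) ∧
  (∀ p ∈ S, ∀ q ∈ S, ∀ r : ℤ × ℤ, r.1 < r.2 →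
    p.1 ≤ r.1 → p.2 ≤ r.2 → r.1 ≤ q.1 → r.2 ≤ q.2 → r ∈ S)

/-- The top edge `(0, N)` belongs to every slice on `{0, …, N}`. -/
lemma slice_mem_top {N : ℤ} {S : Set (ℤ × ℤ)} (hN : 1 ≤ N)
    (h : IsEdgeSlice 0 N S) : ((0 : ℤ), N) ∈ S := by
  obtain ⟨hb, hu, -⟩ := h
  obtain ⟨p, ⟨hp, hpd⟩, -⟩ := hu N hN (by omega)
  obtain ⟨h1, h2, h3⟩ := hb p hp
  have e1 : p.1 = 0 := by omega
  have e2 : p.2 = N := by omega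
  have : p = ((0 : ℤ), N) := Prod.ext e1 e2
  rwa [this] at hp

/-- Forward direction for `N ≥ 2`: removing the top edge gives a slice on a
sub-window. -/
lemma slice_step {N : ℤ} {S : Set (ℤ × ℤ)} (hN : 2 ≤ N)
    (h : IsEdgeSlice 0 N S) :
    IsEdgeSlice 0 (N - 1) (S \ {((0 : ℤ), N)}) ∨
    IsEdgeSlice 1 N (S \ {((0 : ℤ), N)}) := by
  obtain ⟨hb, hu, hc⟩ := h
  obtain ⟨e, ⟨he, hed⟩, heu⟩ := hu (N - 1) (by omega) (by omega)
  obtain ⟨he1, he2, he3⟩ := hb e he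
  have he01 : e.1 = 0 ∨ e.1 = 1 := by omega
  rcases he01 with he0 | heo
  · -- e = (0, N-1) : everything else stays below N
    left
    -- bound claim
    have bound : ∀ p ∈ S \ {((0 : ℤ), N)}, 0 ≤ p.1 ∧ p.1 < p.2 ∧ p.2 ≤ N - 1 := by
      rintro p ⟨hp, hpne⟩
      obtain ⟨h1, h2, h3⟩ := hb p hp
      refine ⟨h1, h2, ?_⟩
      by_contra hcon
      have hp2 : p.2 = N := by omega
      have hp1 : 1 ≤ p.1 := by
        rcases lt_or_ge 0 p.1 with h | h
        · omega
        · exfalso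
          have : p.1 = 0 := by omega
          exact hpne (by simp [Set.mem_singleton_iff]; exact Prod.ext this hp2)
      -- (1, N) ∈ S by convexity between e = (0,N-1) and p
      have hr : ((1 : ℤ), N) ∈ S := by
        refine hc e he p hp ((1 : ℤ), N) (by simp; omega) ?_ ?_ ?_ ?_
        · simp; omega
        · simp; omega
        · simpa using hp1
        · simp; omega
      -- contradiction with uniqueness at length N-1
      have h1e := heu ((1 : ℤ), N) ⟨hr, by simp⟩
      rw [← h1e] at he0
      simp at he0
    refine ⟨bound, ?_, ?_⟩
    · intro d hd1 hd2
      obtain ⟨p, ⟨hp, hpd⟩, hpu⟩ := hu d hd1 (by omega)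
      have hpne : p ≠ ((0 : ℤ), N) := by
        intro hcon; rw [hcon] at hpd; simp at hpd; omega
      refine ⟨p, ⟨⟨hp, hpne⟩, hpd⟩, ?_⟩
      rintro q ⟨⟨hq, -⟩, hqd⟩
      exact hpu q ⟨hq, hqd⟩
    · rintro p hp' q hq' r hr h1 h2 h3 h4
      refine ⟨hc p hp'.1 q hq'.1 r hr h1 h2 h3 h4, ?_⟩
      obtain ⟨-, -, hq3⟩ := bound q hq'
      intro hcon
      rw [Set.mem_singleton_iff] at hcon
      rw [hcon] at h4
      simp at h4
      omega
  · -- e = (1, N) : everything else stays above 1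
    right
    have heq : e = ((1 : ℤ), N) := Prod.ext heo (by omega)
    have bound : ∀ p ∈ S \ {((0 : ℤ), N)}, 1 ≤ p.1 ∧ p.1 < p.2 ∧ p.2 ≤ N := by
      rintro p ⟨hp, hpne⟩
      obtain ⟨h1, h2, h3⟩ := hb p hp
      refine ⟨?_, h2, h3⟩
      by_contra hcon
      have hp1 : p.1 = 0 := by omega
      have hp2 : p.2 ≤ N - 1 := by
        rcases lt_or_ge p.2 N with h | h
        · omega
        · exfalso
          have : p.2 = N := by omega
          exact hpne (by simp [Set.mem_singleton_iff]; exact Prod.ext hp1 this)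
      have hr : ((0 : ℤ), N - 1) ∈ S := by
        refine hc p hp e he ((0 : ℤ), N - 1) (by simp; omega) ?_ ?_ ?_ ?_
        · simp; omega
        · simp; omega
        · simp; omega
        · simp; omega
      have h1e := heu ((0 : ℤ), N - 1) ⟨hr, by simp⟩
      rw [← h1e] at heo
      simp at heo
    refine ⟨bound, ?_, ?_⟩
    · intro d hd1 hd2
      obtain ⟨p, ⟨hp, hpd⟩, hpu⟩ := hu d hd1 (by omega)
      have hpne : p ≠ ((0 : ℤ), N) := by
        intro hcon; rw [hcon] at hpd; simp at hpd; omega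
      refine ⟨p, ⟨⟨hp, hpne⟩, hpd⟩, ?_⟩
      rintro q ⟨⟨hq, -⟩, hqd⟩
      exact hpu q ⟨hq, hqd⟩
    · rintro p hp' q hq' r hr h1 h2 h3 h4
      refine ⟨hc p hp'.1 q hq'.1 r hr h1 h2 h3 h4, ?_⟩
      obtain ⟨hp1, -, -⟩ := bound p hp'
      intro hcon
      rw [Set.mem_singleton_iff] at hcon
      rw [hcon] at h1
      simp at h1
      omega

/-- Backward, window `{0, …, N-1}`. -/
lemma slice_back_left {N : ℤ} (hN : 2 ≤ N) {S' : Set (ℤ × ℤ)}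
    (h : IsEdgeSlice 0 (N - 1) S') :
    IsEdgeSlice 0 N (insert ((0 : ℤ), N) S') := by
  obtain ⟨hb, hu, hc⟩ := h
  refine ⟨?_, ?_, ?_⟩
  · rintro p (rfl | hp)
    · exact ⟨le_refl _, by simp; omega, le_refl _⟩
    · obtain ⟨h1, h2, h3⟩ := hb p hp; exact ⟨h1, h2, by omega⟩
  · intro d hd1 hd2
    rcases eq_or_lt_of_le hd2 with hdN | hdN
    · refine ⟨((0 : ℤ), N), ⟨Set.mem_insert _ _, by simp; omega⟩, ?_⟩
      rintro q ⟨(rfl | hq), hqd⟩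
      · rfl
      · exfalso; obtain ⟨h1, h2, h3⟩ := hb q hq; omega
    · obtain ⟨p, ⟨hp, hpd⟩, hpu⟩ := hu d hd1 (by omega)
      refine ⟨p, ⟨Set.mem_insert_of_mem _ hp, hpd⟩, ?_⟩
      rintro q ⟨(rfl | hq), hqd⟩
      · exfalso; simp at hqd; omega
      · exact hpu q ⟨hq, hqd⟩
  · rintro p (rfl | hp) q (rfl | hq) r hr h1 h2 h3 h4
    · have e1 : r.1 = 0 := le_antisymm (by simpa using h3) (by simpa using h1)
      have e2 : r.2 = N := le_antisymm (by simpa using h4) (by simpa using h2)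
      exact Set.mem_insert_iff.mpr (Or.inl (Prod.ext e1 e2))
    · exfalso
      obtain ⟨-, -, hq3⟩ := hb q hq
      have h2' : N ≤ r.2 := h2
      omega
    · -- q = (0, N), p ∈ S'
      obtain ⟨hp1, hp2, hp3⟩ := hb p hp
      have h3' : r.1 ≤ 0 := h3
      have h4' : r.2 ≤ N := h4
      have hr1 : r.1 = 0 := by omega
      rcases eq_or_lt_of_le h4' with h24 | h24
      · exact Set.mem_insert_iff.mpr (Or.inl (Prod.ext hr1 h24))
      · obtain ⟨q', ⟨hq', hq'd⟩, -⟩ := hu r.2 (by omega) (by omega)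
        obtain ⟨hq'1, hq'2, hq'3⟩ := hb q' hq'
        exact Set.mem_insert_of_mem _
          (hc p hp q' hq' r hr h1 h2 (by omega) (by omega))
    · exact Set.mem_insert_of_mem _ (hc p hp q hq r hr h1 h2 h3 h4)

/-- Backward, window `{1, …, N}`. -/
lemma slice_back_right {N : ℤ} (hN : 2 ≤ N) {S' : Set (ℤ × ℤ)}
    (h : IsEdgeSlice 1 N S') :
    IsEdgeSlice 0 N (insert ((0 : ℤ), N) S') := by
  obtain ⟨hb, hu, hc⟩ := h
  refine ⟨?_, ?_, ?_⟩
  · rintro p (rfl | hp)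
    · exact ⟨le_refl _, by simp; omega, le_refl _⟩
    · obtain ⟨h1, h2, h3⟩ := hb p hp; exact ⟨by omega, h2, h3⟩
  · intro d hd1 hd2
    rcases eq_or_lt_of_le hd2 with hdN | hdN
    · refine ⟨((0 : ℤ), N), ⟨Set.mem_insert _ _, by simp; omega⟩, ?_⟩
      rintro q ⟨(rfl | hq), hqd⟩
      · rfl
      · exfalso; obtain ⟨h1, h2, h3⟩ := hb q hq; omega
    · obtain ⟨p, ⟨hp, hpd⟩, hpu⟩ := hu d hd1 (by omega)
      refine ⟨p, ⟨Set.mem_insert_of_mem _ hp, hpd⟩, ?_⟩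
      rintro q ⟨(rfl | hq), hqd⟩
      · exfalso; simp at hqd; omega
      · exact hpu q ⟨hq, hqd⟩
  · rintro p (rfl | hp) q hq' r hr h1 h2 h3 h4
    · -- p = (0, N)
      have h1' : (0 : ℤ) ≤ r.1 := h1
      have h2' : N ≤ r.2 := h2
      have hq2 : r.2 ≤ N := by
        rcases hq' with rfl | hq
        · exact h4
        · obtain ⟨-, -, hq3⟩ := hb q hq; omega
      have hr2 : r.2 = N := by omega
      rcases eq_or_lt_of_le h1' with h11 | h11
      · exact Set.mem_insert_iff.mpr (Or.inl (Prod.ext h11.symm hr2))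
      · -- 1 ≤ r.1; q ≠ (0,N)
        rcases hq' with rfl | hq
        · exfalso; have h3' : r.1 ≤ 0 := h3; omega
        · obtain ⟨hq1, hq2', hq3⟩ := hb q hq
          obtain ⟨p', ⟨hp', hp'd⟩, -⟩ := hu (N - r.1) (by omega) (by omega)
          obtain ⟨hp'1, hp'2, hp'3⟩ := hb p' hp'
          exact Set.mem_insert_of_mem _
            (hc p' hp' q hq r hr (by omega) (by omega) h3 h4)
    · -- p ∈ S'
      obtain ⟨hp1, hp2, hp3⟩ := hb p hp
      rcases hq' with rfl | hq
      · exfalso; have h3' : r.1 ≤ 0 := h3; omega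
      · exact Set.mem_insert_of_mem _ (hc p hp q hq r hr h1 h2 h3 h4)

/-- Recursive characterization of slices in `Λ(1,n)^♯` (normalized to edges of the
`n`-simplex): `S` is a slice iff either `n = 1` and `S = {(0,1)}`, or `n ≥ 2` and
`S = S' ∪ {(0,n)}` for a slice `S'` supported on `{0, …, n-1}` or on `{1, …, n}`. -/
theorem stmt_12 (n : ℕ) (hn : 1 ≤ n) (S : Set (ℤ × ℤ)) :
    IsEdgeSlice 0 n S ↔
      ((n = 1 ∧ S = {((0 : ℤ), (1 : ℤ))}) ∨
       (2 ≤ n ∧ ∃ S' : Set (ℤ × ℤ), S = insert ((0 : ℤ), (n : ℤ)) S' ∧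
          (IsEdgeSlice 0 ((n : ℤ) - 1) S' ∨ IsEdgeSlice 1 (n : ℤ) S'))) := by
  constructor
  · intro h
    rcases eq_or_lt_of_le hn with h1 | h2
    · left
      refine ⟨h1.symm, ?_⟩
      have hn1 : (n : ℤ) = 1 := by exact_mod_cast congrArg Nat.cast h1.symm
      have htop : ((0 : ℤ), (1 : ℤ)) ∈ S := by
        have := slice_mem_top (N := (n : ℤ)) (by omega) h
        rwa [hn1] at this
      obtain ⟨hb, -, -⟩ := h
      ext p
      simp only [Set.mem_singleton_iff]
      constructor
      · intro hp
        obtain ⟨h1', h2', h3'⟩ := hb p hp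
        rw [hn1] at h3'
        exact Prod.ext (by omega) (by omega)
      · rintro rfl; exact htop
    · right
      have hn2 : (2 : ℤ) ≤ (n : ℤ) := by exact_mod_cast h2
      refine ⟨h2, S \ {((0 : ℤ), (n : ℤ))}, ?_, slice_step hn2 h⟩
      have htop := slice_mem_top (N := (n : ℤ)) (by omega) h
      rw [Set.insert_diff_singleton, Set.insert_eq_of_mem htop]
  · rintro (⟨rfl, rfl⟩ | ⟨h2, S', rfl, hS'⟩)
    · refine ⟨?_, ?_, ?_⟩
      · rintro p rfl; simp
      · intro d hd1 hd2
        have hd : d = 1 := by push_cast at hd2; omega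
        refine ⟨((0 : ℤ), (1 : ℤ)), ⟨rfl, by simp [hd]⟩, ?_⟩
        rintro q ⟨hq, -⟩
        exact hq
      · rintro p rfl q rfl r hr h1' h2' h3' h4'
        have e1 : r.1 = 0 := le_antisymm (by simpa using h3') (by simpa using h1')
        have e2 : r.2 = 1 := le_antisymm (by simpa using h4') (by simpa using h2')
        exact Prod.ext e1 e2
    · have hn2 : (2 : ℤ) ≤ (n : ℤ) := by exact_mod_cast h2
      rcases hS' with hL | hR
      · exact slice_back_left hn2 hL
      · exact slice_back_right hn2 hR
end

section
/- Let X be a simplicial abelian group and n ≥ 1. Define the 0-th horn group X_{Λ_0^n} as the group of tuples (x_1, ..., x_n) ∈ (X_{n-1})^n satisfying d_i x_j = d_{j-1} x_i for all 1 ≤ i < j ≤ n, and let p : X_n → X_{Λ_0^n} be the map x ↦ (d_1 x, ..., d_n x). Then p is a split surjection of abelian groups with kernel ⋂_{i=1}^n ker(d_i : X_n → X_{n-1}); in particular there is a group isomorphism X_n ≅ (⋂_{i=1}^n ker d_i) ⊕ X_{Λ_0^n}. -/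
open CategoryTheory Opposite

/-- The compatibility ("matching") conditions cutting out the `0`-th horn
`X_{Λ₀^{n+1}}` inside `(X_n)^{n+1}`: a tuple `(x_1, …, x_{n+1})` (indexed here by
`Fin (n+1)`) is a horn iff `d_i x_j = d_{j-1} x_i` for all `1 ≤ i < j ≤ n+1`.
(For `n = 0` there are no conditions.) -/
def hornCond0 (X : SimplicialObject AddCommGrpCat) :
    (n : ℕ) → (Fin (n + 1) → X.obj (op (SimplexCategory.mk n))) → Prop
  | 0, _ => True
  | k + 1, x => ∀ i j : Fin (k + 1), i ≤ j →
      X.δ i.succ (x j.succ) = X.δ j.succ (x i.castSucc)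

open Simplicial

/-- The `0`-th horn group `X_{Λ₀^{n+1}}` of a simplicial abelian group. -/
def hornGroup0 (X : SimplicialObject AddCommGrpCat) (n : ℕ) :
    AddSubgroup (Fin (n + 1) → X.obj (op ⦋n⦌)) where
  carrier := {x | hornCond0 X n x}
  zero_mem' := by
    cases n with
    | zero => exact trivial
    | succ k =>
      simp only [Set.mem_setOf_eq, hornCond0]
      intro i j h
      simp
  add_mem' := by
    cases n with
    | zero => intros; exact trivial
    | succ k =>
      intro a b ha hb
      simp only [Set.mem_setOf_eq, hornCond0] at *
      intro i j h
      simp only [Pi.add_apply, map_add, ha i j h, hb i j h]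
  neg_mem' := by
    cases n with
    | zero => intros; exact trivial
    | succ k =>
      intro a ha
      simp only [Set.mem_setOf_eq, hornCond0] at *
      intro i j h
      simp only [Pi.neg_apply, map_neg, ha i j h]

/-- The Segal map `X_{n+1} → (X_n)^{n+1}`, `x ↦ (d_1 x, …, d_{n+1} x)`. -/
def segalMap0 (X : SimplicialObject AddCommGrpCat) (n : ℕ) :
    X.obj (op ⦋n + 1⦌) →+ (Fin (n + 1) → X.obj (op ⦋n⦌)) where
  toFun y := fun i => X.δ i.succ y
  map_zero' := by funext i; simp
  map_add' a b := by funext i; simp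

/-- The `(n+1)`-st term `⋂_{i=1}^{n+1} ker dᵢ` of the normalized Moore complex. -/
def mooreGroup0 (X : SimplicialObject AddCommGrpCat) (n : ℕ) :
    AddSubgroup (X.obj (op ⦋n + 1⦌)) where
  carrier := {y | ∀ i : Fin (n + 1), X.δ i.succ y = 0}
  zero_mem' := by intro i; simp
  add_mem' := by intro a b ha hb i; simp [ha i, hb i]
  neg_mem' := by intro a ha i; simp [ha i]


/-- Recursive splitting sequence. -/
def Fseq (X : SimplicialObject AddCommGrpCat) (N : ℕ)
    (x : Fin (N + 2) → X.obj (op ⦋N + 1⦌)) : ℕ → X.obj (op ⦋N + 2⦌) := fun k => match k with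
  | 0 => 0
  | k + 1 =>
    Fseq X N x k
      - X.σ ⟨N + 1 - k, by omega⟩ (X.δ (Fin.succ ⟨N + 1 - k, by omega⟩) (Fseq X N x k))
      + X.σ ⟨N + 1 - k, by omega⟩ (x ⟨N + 1 - k, by omega⟩)

lemma Fseq_zero (X : SimplicialObject AddCommGrpCat) (N k : ℕ) : Fseq X N 0 k = 0 := by
  induction k with
  | zero => rfl
  | succ k ih => simp [Fseq, ih]

lemma Fseq_add (X : SimplicialObject AddCommGrpCat) (N : ℕ)
    (x y : Fin (N + 2) → X.obj (op ⦋N + 1⦌)) (k : ℕ) :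
    Fseq X N (x + y) k = Fseq X N x k + Fseq X N y k := by
  induction k with
  | zero => simp [Fseq]
  | succ k ih => simp [Fseq, ih, map_add]; abel

lemma Fseq_delta (X : SimplicialObject AddCommGrpCat) (N : ℕ)
    (x : Fin (N + 2) → X.obj (op ⦋N + 1⦌))
    (hx : ∀ i j : Fin (N + 1), i ≤ j →
      X.δ i.succ (x j.succ) = X.δ j.succ (x i.castSucc)) :
    ∀ k, k ≤ N + 2 → ∀ j : Fin (N + 2), N + 2 ≤ k + (j : ℕ) →
      X.δ j.succ (Fseq X N x k) = x j := by
  intro k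
  induction k with
  | zero =>
    intro _ j hj
    exact absurd hj (by have := j.isLt; omega)
  | succ k ih =>
    intro hk j hj
    have hkN : k ≤ N + 1 := by omega
    set m : Fin (N + 2) := ⟨N + 1 - k, by omega⟩ with hm
    have hmval : (m : ℕ) = N + 1 - k := rfl
    show X.δ j.succ
        (Fseq X N x k - X.σ m (X.δ m.succ (Fseq X N x k)) + X.σ m (x m)) = x j
    rw [map_add, map_sub]
    have hmj : (m : ℕ) ≤ (j : ℕ) := by rw [hmval]; omega
    rcases eq_or_lt_of_le hmj with heq | hlt
    · have hje : j = m := Fin.ext heq.symm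
      rw [hje]
      have hid : ∀ y, X.δ m.succ (X.σ m y) = y := by
        intro y
        have h := SimplicialObject.δ_comp_σ_succ (X := X) (i := m)
        calc X.δ m.succ (X.σ m y) = (X.σ m ≫ X.δ m.succ) y := (comp_apply _ _ _).symm
          _ = y := by rw [h]; rfl
      rw [hid, hid]
      abel
    · have hIH : X.δ j.succ (Fseq X N x k) = x j := ih (by omega) j (by omega)
      have hmlt : (m : ℕ) < N + 1 := by omega
      set mc : Fin (N + 1) := ⟨(m : ℕ), hmlt⟩ with hmcdef
      have hmcval : (mc : ℕ) = (m : ℕ) := rfl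
      have hgt : ∀ y : X.obj (op ⦋N + 1⦌),
          X.δ j.succ (X.σ m y) = X.σ mc (X.δ j y) := by
        intro y
        have h := SimplicialObject.δ_comp_σ_of_gt' (X := X) (n := N) (i := j.succ)
          (j := m) (Fin.succ_lt_succ_iff.mpr hlt)
        calc X.δ j.succ (X.σ m y) = (X.σ m ≫ X.δ j.succ) y := (comp_apply _ _ _).symm
          _ = X.σ mc (X.δ j y) := by rw [h, comp_apply, Fin.pred_succ]; rfl
      rw [hgt, hgt, hIH]
      have hcs : (mc.succ).castSucc = m.succ := by ext; simp [hmcval]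
      have hdd := SimplicialObject.δ_comp_δ (X := X) (i := mc.succ) (j := j)
        (by rw [Fin.le_def, Fin.val_succ, hmcval]; omega)
      have h2 : X.δ j (X.δ m.succ (Fseq X N x k)) = X.δ mc.succ (x j) := by
        rw [← hcs, ← comp_apply, ← hdd, comp_apply, hIH]
      rw [h2]
      set jp : Fin (N + 1) := ⟨(j : ℕ) - 1, by omega⟩ with hjpdef
      have hjpval : (jp : ℕ) = (j : ℕ) - 1 := rfl
      have hjp : jp.succ = j := by ext; rw [Fin.val_succ, hjpval]; omega
      have hmcc : mc.castSucc = m := by ext; simp [hmcval]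
      have hh := hx mc jp (by rw [Fin.le_def, hmcval, hjpval]; omega)
      rw [hjp, hmcc] at hh
      rw [hh]
      abel


lemma package0 (X : SimplicialObject AddCommGrpCat) (n : ℕ)
    (h1 : ∀ y : X.obj (op ⦋n + 1⦌), segalMap0 X n y ∈ hornGroup0 X n)
    (f : hornGroup0 X n →+ X.obj (op ⦋n + 1⦌))
    (hf : ∀ z : hornGroup0 X n,
      segalMap0 X n (f z) = (z : Fin (n + 1) → X.obj (op ⦋n⦌))) :
    (∀ y : X.obj (op ⦋n + 1⦌), segalMap0 X n y ∈ hornGroup0 X n) ∧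
    (∃ f : hornGroup0 X n →+ X.obj (op ⦋n + 1⦌),
      ∀ z : hornGroup0 X n, segalMap0 X n (f z) = (z : Fin (n + 1) → X.obj (op ⦋n⦌))) ∧
    (∀ y : X.obj (op ⦋n + 1⦌), segalMap0 X n y = 0 ↔ y ∈ mooreGroup0 X n) ∧
    Nonempty ((X.obj (op ⦋n + 1⦌) : Type _) ≃+ (↥(mooreGroup0 X n) × ↥(hornGroup0 X n))) := by
  have h3 : ∀ y : X.obj (op ⦋n + 1⦌), segalMap0 X n y = 0 ↔ y ∈ mooreGroup0 X n := by
    intro y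
    constructor
    · intro h i
      simpa [segalMap0] using congrFun h i
    · intro h
      funext i
      simpa [segalMap0] using h i
  refine ⟨h1, ⟨f, hf⟩, h3, ?_⟩
  let P : X.obj (op ⦋n + 1⦌) →+ hornGroup0 X n :=
    { toFun := fun y => ⟨segalMap0 X n y, h1 y⟩
      map_zero' := Subtype.ext (map_zero _)
      map_add' := fun a b => Subtype.ext (map_add _ a b) }
  have hPval : ∀ y, ((P y : hornGroup0 X n) : Fin (n + 1) → X.obj (op ⦋n⦌))
      = segalMap0 X n y := fun _ => rfl
  have hPf : ∀ z, P (f z) = z := fun z => Subtype.ext (hf z)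
  have hPm : ∀ m : mooreGroup0 X n, P (m : X.obj (op ⦋n + 1⦌)) = 0 :=
    fun m => Subtype.ext ((h3 _).mpr m.2)
  have hmem : ∀ y : X.obj (op ⦋n + 1⦌), y - f (P y) ∈ mooreGroup0 X n := by
    intro y
    apply (h3 _).mp
    rw [map_sub, hf (P y), hPval]
    exact sub_self _
  refine ⟨{ toFun := fun y => (⟨y - f (P y), hmem y⟩, P y)
            invFun := fun p => (p.1 : X.obj (op ⦋n + 1⦌)) + f p.2
            left_inv := ?_, right_inv := ?_, map_add' := ?_ }⟩
  · intro y
    simp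
  · rintro ⟨m, z⟩
    have hP : P ((m : X.obj (op ⦋n + 1⦌)) + f z) = z := by
      rw [map_add, hPm, hPf, zero_add]
    refine Prod.ext ?_ hP
    apply Subtype.ext
    show (m : X.obj (op ⦋n + 1⦌)) + f z - f (P ((m : X.obj (op ⦋n + 1⦌)) + f z))
        = (m : X.obj (op ⦋n + 1⦌))
    rw [hP]
    abel
  · intro a b
    refine Prod.ext (Subtype.ext ?_) (Subtype.ext ?_)
    · show a + b - f (P (a + b)) = (a - f (P a)) + (b - f (P b))
      rw [map_add, map_add]
      abel
    · exact map_add _ a b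

/-- For a simplicial abelian group `X` and `n ≥ 1` (here `n+1`), the Segal map
`p : X_{n+1} → X_{Λ₀^{n+1}}`, `x ↦ (d_1 x, …, d_{n+1} x)`, is a split surjection of
abelian groups onto the horn group, with kernel `⋂_{i=1}^{n+1} ker dᵢ`; in
particular `X_{n+1} ≅ (⋂_{i=1}^{n+1} ker dᵢ) ⊕ X_{Λ₀^{n+1}}`. -/
theorem stmt_15 (X : SimplicialObject AddCommGrpCat) (n : ℕ) :
    (∀ y : X.obj (op ⦋n + 1⦌), segalMap0 X n y ∈ hornGroup0 X n) ∧
    (∃ f : hornGroup0 X n →+ X.obj (op ⦋n + 1⦌),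
      ∀ z : hornGroup0 X n, segalMap0 X n (f z) = (z : Fin (n + 1) → X.obj (op ⦋n⦌))) ∧
    (∀ y : X.obj (op ⦋n + 1⦌), segalMap0 X n y = 0 ↔ y ∈ mooreGroup0 X n) ∧
    Nonempty ((X.obj (op ⦋n + 1⦌) : Type _) ≃+ (↥(mooreGroup0 X n) × ↥(hornGroup0 X n))) := by
  have h1 : ∀ y : X.obj (op ⦋n + 1⦌), segalMap0 X n y ∈ hornGroup0 X n := by
    cases n with
    | zero => intro y; exact trivial
    | succ N =>
      intro y i j hij
      show X.δ i.succ (X.δ (j.succ).succ y) = X.δ j.succ (X.δ (i.castSucc).succ y)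
      have hdd := SimplicialObject.δ_comp_δ (X := X) (i := i.succ) (j := j.succ)
        (by rwa [Fin.succ_le_succ_iff])
      calc X.δ i.succ (X.δ (j.succ).succ y)
          = (X.δ (j.succ).succ ≫ X.δ i.succ) y := (comp_apply _ _ _).symm
        _ = X.δ j.succ (X.δ (i.succ).castSucc y) := by rw [hdd, comp_apply]
        _ = X.δ j.succ (X.δ (i.castSucc).succ y) := by rw [← Fin.succ_castSucc]
  have h2 : ∃ f : hornGroup0 X n →+ X.obj (op ⦋n + 1⦌),
      ∀ z : hornGroup0 X n, segalMap0 X n (f z) = (z : Fin (n + 1) → X.obj (op ⦋n⦌)) := by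
    cases n with
    | zero =>
      refine ⟨{ toFun := fun z => X.σ 0 ((z : Fin 1 → X.obj (op ⦋0⦌)) 0)
                map_zero' := by simp
                map_add' := by intro a b; simp }, ?_⟩
      intro z
      funext i
      have hi : i = 0 := Fin.ext (by omega)
      subst hi
      show X.δ (Fin.succ 0) (X.σ 0 ((z : Fin 1 → X.obj (op ⦋0⦌)) 0))
          = (z : Fin 1 → X.obj (op ⦋0⦌)) 0
      have h := SimplicialObject.δ_comp_σ_succ (X := X) (i := (0 : Fin 1))
      calc X.δ (Fin.succ 0) (X.σ 0 ((z : Fin 1 → X.obj (op ⦋0⦌)) 0))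
          = (X.σ 0 ≫ X.δ (Fin.succ 0)) ((z : Fin 1 → X.obj (op ⦋0⦌)) 0) :=
            (comp_apply _ _ _).symm
        _ = (z : Fin 1 → X.obj (op ⦋0⦌)) 0 := by rw [h]; rfl
    | succ N =>
      refine ⟨{ toFun := fun z => Fseq X N (z : Fin (N + 2) → X.obj (op ⦋N + 1⦌)) (N + 2)
                map_zero' := Fseq_zero X N (N + 2)
                map_add' := fun a b => Fseq_add X N _ _ (N + 2) }, ?_⟩
      intro z
      funext j
      show X.δ j.succ (Fseq X N (z : Fin (N + 2) → X.obj (op ⦋N + 1⦌)) (N + 2))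
          = (z : Fin (N + 2) → X.obj (op ⦋N + 1⦌)) j
      exact Fseq_delta X N _ z.2 (N + 2) le_rfl j (by omega)
  obtain ⟨f, hf⟩ := h2
  exact package0 X n h1 f hf
end
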